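/- Let B₁ and B₂ be skew left braces, α a group homomorphism from (B₂,∘) to Aut(B₁,+,∘), and B := B₁ ⋊_α B₂ the semidirect product. Suppose B₁ is Artinian. If B is semiprime, then B₁ is semiprime. -/

import Mathlib

/-- A *skew left brace* is a set with two group structures `(B,+)` and `(B,∘)`
(the latter written multiplicatively) satisfying `a∘(b+c) = a∘b - a + a∘c`.
The two identity elements automatically coincide. -/
class SkewLeftBrace (B : Type*) extends AddGroup B, Group B where
  mul_add_eq : ∀ a b c : B, a * (b + c) = a * b - a + a * c

namespace SkewLeftBrace

variable {B : Type*} [SkewLeftBrace B]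

/-- The map `λ_a : b ↦ -a + a∘b`. -/
def lmap (a b : B) : B := -a + a * b

/-- The brace star operation `a*b := -a + a∘b - b`. -/
def bstar (a b : B) : B := -a + a * b - b

/-- `X*Y`: the additive subgroup generated by all `bstar x y`, `x ∈ X`, `y ∈ Y`,
regarded as a set. -/
def setStar (X Y : Set B) : Set B :=
  ↑(AddSubgroup.closure {z : B | ∃ x ∈ X, ∃ y ∈ Y, z = bstar x y})

/-- Pointwise sum of two subsets. -/
def setSum (X Y : Set B) : Set B := {w : B | ∃ x ∈ X, ∃ y ∈ Y, w = x + y}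

/-- `X^Z := {z + x - z : x ∈ X, z ∈ Z}`. -/
def setConj (X Z : Set B) : Set B := {w : B | ∃ x ∈ X, ∃ z ∈ Z, w = z + x + -z}

/-- An ideal of a skew left brace: a subgroup of `(B,+)` which is normal in both
`(B,+)` and `(B,∘)` and invariant under all the maps `λ_a`. -/
structure IsIdeal (I : Set B) : Prop where
  zero_mem : (0 : B) ∈ I
  add_mem : ∀ ⦃x y : B⦄, x ∈ I → y ∈ I → x + y ∈ I
  neg_mem : ∀ ⦃x : B⦄, x ∈ I → -x ∈ I
  add_conj_mem : ∀ (b : B) ⦃x : B⦄, x ∈ I → b + x + -b ∈ I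
  mul_mem : ∀ ⦃x y : B⦄, x ∈ I → y ∈ I → x * y ∈ I
  inv_mem : ∀ ⦃x : B⦄, x ∈ I → x⁻¹ ∈ I
  mul_conj_mem : ∀ (b : B) ⦃x : B⦄, x ∈ I → b * x * b⁻¹ ∈ I
  lmap_mem : ∀ (a : B) ⦃x : B⦄, x ∈ I → lmap a x ∈ I

/-- A minimal ideal: a nonzero ideal whose only sub-ideals are `{0}` and itself. -/
def IsMinimalIdeal (I : Set B) : Prop :=
  IsIdeal I ∧ I ≠ {0} ∧ ∀ J : Set B, IsIdeal J → J ⊆ I → J = {0} ∨ J = I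

theorem mul_zero' (a : B) : a * (0 : B) = a := by
  have h := SkewLeftBrace.mul_add_eq a (0 : B) (0 : B)
  rw [add_zero] at h
  have h2 : a * (0:B) - a = 0 := (right_eq_add.mp h)
  exact sub_eq_zero.mp h2

theorem zero_eq_one : (0 : B) = 1 := by
  have h := mul_zero' (1 : B)
  rw [one_mul] at h
  exact h

theorem IsIdeal.one_mem {I : Set B} (h : IsIdeal I) : (1 : B) ∈ I :=
  (zero_eq_one (B := B)) ▸ h.zero_mem

variable (B) in
/-- A skew left brace is *semiprime* if `I*I ≠ {0}` for every nonzero ideal `I`. -/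
def Semiprime : Prop := ∀ I : Set B, IsIdeal I → I ≠ {0} → setStar I I ≠ {0}

variable (B) in
/-- A skew left brace is *prime*... (and) *simple* if its only ideals are `{0}` and `B`,
and these are distinct. -/
def Simple : Prop :=
  ({0} : Set B) ≠ Set.univ ∧ ∀ I : Set B, IsIdeal I → I = {0} ∨ I = Set.univ

variable (B) in
/-- A skew left brace is *Artinian* if every descending chain of ideals stabilizes. -/
def Artinian : Prop :=
  ∀ f : ℕ → Set B, (∀ n, IsIdeal (f n)) → (∀ n, f (n + 1) ⊆ f n) →
    ∃ N, ∀ n, N ≤ n → f n = f N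

/-- The `*`-products of copies of a fixed set `I`. -/
inductive IsStarPowerOf (I : Set B) : Set B → Prop
  | base : IsStarPowerOf I I
  | star {X Y : Set B} : IsStarPowerOf I X → IsStarPowerOf I Y →
      IsStarPowerOf I (setStar X Y)

variable (B) in
/-- A skew left brace is *strongly semiprime* if for every nonzero ideal `I`, every
`*`-product of copies of `I` is nonzero. -/
def StronglySemiprime : Prop :=
  ∀ I : Set B, IsIdeal I → I ≠ {0} → ∀ X : Set B, IsStarPowerOf I X → X ≠ {0}

/-- The `*`-products of nonzero ideals. -/
inductive IsStarProdOfNonzeroIdeals : Set B → Prop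
  | ideal {I : Set B} : IsIdeal I → I ≠ {0} → IsStarProdOfNonzeroIdeals I
  | star {X Y : Set B} : IsStarProdOfNonzeroIdeals X → IsStarProdOfNonzeroIdeals Y →
      IsStarProdOfNonzeroIdeals (setStar X Y)

variable (B) in
/-- A skew left brace is *strongly prime* if every `*`-product of nonzero ideals is nonzero. -/
def StronglyPrime : Prop :=
  ∀ X : Set B, IsStarProdOfNonzeroIdeals X → X ≠ {0}

end SkewLeftBrace
namespace SkewLeftBrace

variable {B : Type*} [SkewLeftBrace B]

/-- An ideal, regarded as a skew left brace with the restricted operations. -/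
def IsIdeal.brace {I : Set B} (h : IsIdeal I) : SkewLeftBrace I :=
  letI : Zero I := ⟨⟨0, h.zero_mem⟩⟩
  letI : Add I := ⟨fun x y => ⟨x.1 + y.1, h.add_mem x.2 y.2⟩⟩
  letI : Neg I := ⟨fun x => ⟨-x.1, h.neg_mem x.2⟩⟩
  letI : One I := ⟨⟨1, h.one_mem⟩⟩
  letI : Mul I := ⟨fun x y => ⟨x.1 * y.1, h.mul_mem x.2 y.2⟩⟩
  letI : Inv I := ⟨fun x => ⟨x.1⁻¹, h.inv_mem x.2⟩⟩
  { add := (· + ·)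
    zero := 0
    neg := (- ·)
    nsmul := nsmulRec
    zsmul := zsmulRec
    add_assoc := fun a b c => Subtype.ext (add_assoc a.1 b.1 c.1)
    zero_add := fun a => Subtype.ext (zero_add a.1)
    add_zero := fun a => Subtype.ext (add_zero a.1)
    neg_add_cancel := fun a => Subtype.ext (neg_add_cancel a.1)
    mul := (· * ·)
    one := 1
    inv := (·⁻¹)
    npow := npowRec
    zpow := zpowRec
    mul_assoc := fun a b c => Subtype.ext (mul_assoc a.1 b.1 c.1)
    one_mul := fun a => Subtype.ext (one_mul a.1)
    mul_one := fun a => Subtype.ext (mul_one a.1)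
    inv_mul_cancel := fun a => Subtype.ext (inv_mul_cancel a.1)
    mul_add_eq := fun a b c =>
      Subtype.ext (by
        show a.1 * (b.1 + c.1) = a.1 * b.1 + -a.1 + a.1 * c.1
        rw [SkewLeftBrace.mul_add_eq, sub_eq_add_neg]) }

/-- The direct product of two skew left braces, with componentwise operations. -/
def prodBrace (B₁ B₂ : Type*) [SkewLeftBrace B₁] [SkewLeftBrace B₂] :
    SkewLeftBrace (B₁ × B₂) :=
  { (inferInstance : AddGroup (B₁ × B₂)), (inferInstance : Group (B₁ × B₂)) with
    mul_add_eq := fun a b c =>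
      Prod.ext (by simp [SkewLeftBrace.mul_add_eq]) (by simp [SkewLeftBrace.mul_add_eq]) }

/-- Two skew left braces are isomorphic if there is a bijection preserving `+` and `∘`. -/
def IsBraceIsomorphic (A C : Type*) [SkewLeftBrace A] [SkewLeftBrace C] : Prop :=
  ∃ f : A ≃ C, (∀ x y : A, f (x + y) = f x + f y) ∧ (∀ x y : A, f (x * y) = f x * f y)

/-- A group homomorphism from `(B₂,∘)` to the automorphism group `Aut(B₁,+,∘)` of the
skew left brace `B₁`, presented as an action `act : B₂ → B₁ → B₁` by skew left brace
automorphisms. -/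
structure BraceActionHom (B₂ B₁ : Type*) [SkewLeftBrace B₂] [SkewLeftBrace B₁] where
  act : B₂ → B₁ → B₁
  act_bijective : ∀ a : B₂, Function.Bijective (act a)
  act_add : ∀ (a : B₂) (x y : B₁), act a (x + y) = act a x + act a y
  act_mul : ∀ (a : B₂) (x y : B₁), act a (x * y) = act a x * act a y
  act_hom : ∀ (a b : B₂) (x : B₁), act (a * b) x = act a (act b x)
  act_one : ∀ x : B₁, act (1 : B₂) x = x

variable {B₁ B₂ : Type*} [SkewLeftBrace B₁] [SkewLeftBrace B₂]

theorem BraceActionHom.act_one' (α : BraceActionHom B₂ B₁) (a : B₂) :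
    α.act a (1 : B₁) = 1 := by
  have h := α.act_mul a 1 1
  rw [mul_one] at h
  exact mul_eq_left.mp h.symm

/-- The underlying type of the semidirect product of two skew left braces. -/
@[ext]
structure SDP (B₁ B₂ : Type*) where
  fst : B₁
  snd : B₂

/-- The semidirect product `B₁ ⋊_α B₂` of skew left braces: the additive group is the
direct product, while `(a₁,a₂) ∘ (b₁,b₂) = (a₁ ∘ α_{a₂}(b₁), a₂ ∘ b₂)`. -/
def BraceActionHom.sdp (α : BraceActionHom B₂ B₁) : SkewLeftBrace (SDP B₁ B₂) :=
  letI : Zero (SDP B₁ B₂) := ⟨⟨0, 0⟩⟩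
  letI : Add (SDP B₁ B₂) := ⟨fun p q => ⟨p.fst + q.fst, p.snd + q.snd⟩⟩
  letI : Neg (SDP B₁ B₂) := ⟨fun p => ⟨-p.fst, -p.snd⟩⟩
  letI : One (SDP B₁ B₂) := ⟨⟨1, 1⟩⟩
  letI : Mul (SDP B₁ B₂) := ⟨fun p q => ⟨p.fst * α.act p.snd q.fst, p.snd * q.snd⟩⟩
  letI : Inv (SDP B₁ B₂) := ⟨fun p => ⟨α.act p.snd⁻¹ p.fst⁻¹, p.snd⁻¹⟩⟩
  { add := (· + ·)
    zero := 0
    neg := (- ·)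
    nsmul := nsmulRec
    zsmul := zsmulRec
    add_assoc := fun a b c =>
      SDP.ext (add_assoc a.fst b.fst c.fst) (add_assoc a.snd b.snd c.snd)
    zero_add := fun a => SDP.ext (zero_add a.fst) (zero_add a.snd)
    add_zero := fun a => SDP.ext (add_zero a.fst) (add_zero a.snd)
    neg_add_cancel := fun a => SDP.ext (neg_add_cancel a.fst) (neg_add_cancel a.snd)
    mul := (· * ·)
    one := 1
    inv := (·⁻¹)
    npow := npowRec
    zpow := zpowRec
    mul_assoc := fun a b c =>
      SDP.ext
        (by show (a.fst * α.act a.snd b.fst) * α.act (a.snd * b.snd) c.fst =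
              a.fst * α.act a.snd (b.fst * α.act b.snd c.fst)
            rw [α.act_hom, α.act_mul, mul_assoc])
        (mul_assoc a.snd b.snd c.snd)
    one_mul := fun a =>
      SDP.ext (by show (1 : B₁) * α.act 1 a.fst = a.fst; rw [α.act_one, one_mul])
        (one_mul a.snd)
    mul_one := fun a =>
      SDP.ext (by show a.fst * α.act a.snd (1 : B₁) = a.fst; rw [α.act_one', mul_one])
        (mul_one a.snd)
    inv_mul_cancel := fun a =>
      SDP.ext
        (by show α.act a.snd⁻¹ a.fst⁻¹ * α.act a.snd⁻¹ a.fst = 1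
            rw [← α.act_mul, inv_mul_cancel, α.act_one'])
        (inv_mul_cancel a.snd)
    mul_add_eq := fun a b c =>
      SDP.ext
        (by show a.fst * α.act a.snd (b.fst + c.fst) =
              a.fst * α.act a.snd b.fst + -a.fst + a.fst * α.act a.snd c.fst
            rw [α.act_add, SkewLeftBrace.mul_add_eq, sub_eq_add_neg])
        (by show a.snd * (b.snd + c.snd) = a.snd * b.snd + -a.snd + a.snd * c.snd
            rw [SkewLeftBrace.mul_add_eq, sub_eq_add_neg]) }

end SkewLeftBrace

namespace SkewLeftBrace

variable {B : Type*} [SkewLeftBrace B]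

theorem mul_eq_add_lmap (a b : B) : a * b = a + lmap a b := by
  rw [lmap, ← add_assoc, add_neg_cancel, zero_add]

theorem lmap_add (a x y : B) : lmap a (x + y) = lmap a x + lmap a y := by
  simp only [lmap, mul_add_eq, sub_eq_add_neg, add_assoc]

theorem lmap_zero (a : B) : lmap a 0 = 0 := by
  rw [lmap, mul_zero', neg_add_cancel]

theorem lmap_neg (a x : B) : lmap a (-x) = -(lmap a x) := by
  have h := lmap_add a x (-x)
  rw [add_neg_cancel, lmap_zero] at h
  exact (neg_eq_of_add_eq_zero_right h.symm).symm

theorem lmap_sub (a x y : B) : lmap a (x - y) = lmap a x - lmap a y := by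
  rw [sub_eq_add_neg, lmap_add, lmap_neg, sub_eq_add_neg]

theorem lmap_def (a b : B) : lmap a b = -a + a * b := rfl

theorem lmap_lmap (a b c : B) : lmap a (lmap b c) = lmap (a * b) c := by
  rw [lmap_def b c, lmap_add, lmap_neg, lmap_def a b, lmap_def a (b * c),
    lmap_def (a * b) c, neg_add_rev, neg_neg, ← mul_assoc]
  simp only [add_assoc, add_neg_cancel_left]

theorem lmap_one (c : B) : lmap (1 : B) c = c := by
  rw [lmap, one_mul, ← zero_eq_one, neg_zero, zero_add]

theorem lmap_self_inv (a : B) : lmap a a⁻¹ = -a := by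
  rw [lmap, mul_inv_cancel, ← zero_eq_one, add_zero]

theorem inv_eq_neg_lmap (a : B) : a⁻¹ = -(lmap a⁻¹ a) := by
  have h := lmap_self_inv (a⁻¹ : B)
  rw [inv_inv] at h
  rw [h, neg_neg]

theorem bstar_eq (a b : B) : bstar a b = lmap a b - b := rfl

theorem lmap_eq_bstar_add (a b : B) : lmap a b = bstar a b + b := by
  rw [bstar_eq, sub_add_cancel]

theorem add_eq_mul_lmap (x y : B) : x + y = x * lmap x⁻¹ y := by
  rw [mul_eq_add_lmap, lmap_lmap, mul_inv_cancel, lmap_one]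

theorem bstar_zero_right (a : B) : bstar a 0 = 0 := by
  rw [bstar_eq, lmap_zero, sub_zero]

theorem bstar_zero_left (c : B) : bstar 0 c = 0 := by
  rw [bstar_eq, zero_eq_one, lmap_one, sub_self]
  exact zero_eq_one

theorem bstar_add_right (a b c : B) : bstar a (b + c) = bstar a b + b + bstar a c - b := by
  simp only [bstar_eq, lmap_add, sub_eq_add_neg, neg_add_rev, add_assoc,
    neg_add_cancel_left]

theorem bstar_mul_left (u v c : B) : bstar (u * v) c = lmap u (bstar v c) + bstar u c := by
  rw [bstar_eq, bstar_eq, bstar_eq, lmap_sub, lmap_lmap]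
  simp only [sub_eq_add_neg, add_assoc, neg_add_cancel_left]

theorem bstar_inv (v c : B) : bstar v⁻¹ c = -(bstar v (lmap v⁻¹ c)) := by
  rw [bstar_eq, bstar_eq, lmap_lmap, mul_inv_cancel, lmap_one, neg_sub]

theorem neg_inv_eq (u : B) : (-u)⁻¹ = lmap (-u)⁻¹ u := by
  have h := add_eq_mul_lmap (-u) u
  rw [neg_add_cancel, zero_eq_one] at h
  exact inv_eq_of_mul_eq_one_right h.symm

theorem mul_conj_formula (b x : B) :
    b * x * b⁻¹ = b + (lmap b x + lmap b (bstar x b⁻¹)) + -b := by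
  rw [mul_assoc, mul_eq_add_lmap b, mul_eq_add_lmap x, lmap_add,
    lmap_eq_bstar_add x, lmap_add, lmap_self_inv]
  simp only [add_assoc]

theorem IsIdeal.bstar_mem_left {I : Set B} (h : IsIdeal I) (a : B) {x : B}
    (hx : x ∈ I) : bstar a x ∈ I := by
  rw [bstar_eq, sub_eq_add_neg]
  exact h.add_mem (h.lmap_mem a hx) (h.neg_mem hx)

theorem IsIdeal.bstar_mem_right {I : Set B} (h : IsIdeal I) {x : B}
    (hx : x ∈ I) (a : B) : bstar x a ∈ I := by
  have hx' : lmap a (a⁻¹ * x * a) ∈ I := by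
    refine h.lmap_mem a ?_
    have := h.mul_conj_mem a⁻¹ hx
    rwa [inv_inv] at this
  have key : bstar x a = -x + (a + lmap a (a⁻¹ * x * a) + -a) := by
    simp only [bstar_eq, lmap_def, sub_eq_add_neg, add_assoc, ← mul_assoc,
      add_neg_cancel_left, mul_inv_cancel_left, mul_inv_cancel, one_mul]
  rw [key]
  exact h.add_mem (h.neg_mem hx) (h.add_conj_mem a hx')

theorem IsIdeal.inter {I J : Set B} (hI : IsIdeal I) (hJ : IsIdeal J) :
    IsIdeal (I ∩ J) where
  zero_mem := ⟨hI.zero_mem, hJ.zero_mem⟩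
  add_mem := fun _ _ hx hy => ⟨hI.add_mem hx.1 hy.1, hJ.add_mem hx.2 hy.2⟩
  neg_mem := fun _ hx => ⟨hI.neg_mem hx.1, hJ.neg_mem hx.2⟩
  add_conj_mem := fun b _ hx => ⟨hI.add_conj_mem b hx.1, hJ.add_conj_mem b hx.2⟩
  mul_mem := fun _ _ hx hy => ⟨hI.mul_mem hx.1 hy.1, hJ.mul_mem hx.2 hy.2⟩
  inv_mem := fun _ hx => ⟨hI.inv_mem hx.1, hJ.inv_mem hx.2⟩
  mul_conj_mem := fun b _ hx => ⟨hI.mul_conj_mem b hx.1, hJ.mul_conj_mem b hx.2⟩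
  lmap_mem := fun a _ hx => ⟨hI.lmap_mem a hx.1, hJ.lmap_mem a hx.2⟩

section Family

variable {ι : Sort*} {F : ι → Set B}

theorem family_lmap_mem (hF : ∀ i, IsIdeal (F i)) (a : B) {x : B}
    (hx : x ∈ AddSubgroup.closure (⋃ i, F i)) :
    lmap a x ∈ AddSubgroup.closure (⋃ i, F i) := by
  refine AddSubgroup.closure_induction
    (p := fun y _ => lmap a y ∈ AddSubgroup.closure (⋃ i, F i)) ?_ ?_ ?_ ?_ hx
  · intro y hy
    obtain ⟨i, hyi⟩ := Set.mem_iUnion.mp hy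
    exact AddSubgroup.subset_closure (Set.mem_iUnion.mpr ⟨i, (hF i).lmap_mem a hyi⟩)
  · show lmap a (0 : B) ∈ AddSubgroup.closure (⋃ i, F i)
    rw [lmap_zero]; exact zero_mem _
  · intro u v _ _ ihu ihv
    rw [lmap_add]; exact add_mem ihu ihv
  · intro u _ ihu
    rw [lmap_neg]; exact neg_mem ihu

theorem family_conj_mem (hF : ∀ i, IsIdeal (F i)) (b : B) {x : B}
    (hx : x ∈ AddSubgroup.closure (⋃ i, F i)) :
    b + x + -b ∈ AddSubgroup.closure (⋃ i, F i) := by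
  refine AddSubgroup.closure_induction
    (p := fun y _ => b + y + -b ∈ AddSubgroup.closure (⋃ i, F i)) ?_ ?_ ?_ ?_ hx
  · intro y hy
    obtain ⟨i, hyi⟩ := Set.mem_iUnion.mp hy
    exact AddSubgroup.subset_closure (Set.mem_iUnion.mpr ⟨i, (hF i).add_conj_mem b hyi⟩)
  · show b + (0 : B) + -b ∈ AddSubgroup.closure (⋃ i, F i)
    rw [add_zero, add_neg_cancel]; exact zero_mem _
  · intro u v _ _ ihu ihv
    have h : b + (u + v) + -b = (b + u + -b) + (b + v + -b) := by
      simp [add_assoc]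
    rw [h]; exact add_mem ihu ihv
  · intro u _ ihu
    have h : b + -u + -b = -(b + u + -b) := by
      simp [neg_add_rev, add_assoc]
    rw [h]; exact neg_mem ihu

theorem family_inv_mem (hF : ∀ i, IsIdeal (F i)) {x : B}
    (hx : x ∈ AddSubgroup.closure (⋃ i, F i)) :
    x⁻¹ ∈ AddSubgroup.closure (⋃ i, F i) := by
  rw [inv_eq_neg_lmap]
  exact neg_mem (family_lmap_mem hF _ hx)

theorem family_mul_mem (hF : ∀ i, IsIdeal (F i)) {x y : B}
    (hx : x ∈ AddSubgroup.closure (⋃ i, F i)) (hy : y ∈ AddSubgroup.closure (⋃ i, F i)) :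
    x * y ∈ AddSubgroup.closure (⋃ i, F i) := by
  rw [mul_eq_add_lmap]
  exact add_mem hx (family_lmap_mem hF _ hy)

theorem family_bstar_right (hF : ∀ i, IsIdeal (F i)) {x : B}
    (hx : x ∈ AddSubgroup.closure (⋃ i, F i)) :
    ∀ a c : B, bstar (lmap a x) c ∈ AddSubgroup.closure (⋃ i, F i) := by
  refine AddSubgroup.closure_induction
    (p := fun y _ => ∀ a c : B, bstar (lmap a y) c ∈ AddSubgroup.closure (⋃ i, F i))
    ?_ ?_ ?_ ?_ hx
  · intro y hy a c
    obtain ⟨i, hyi⟩ := Set.mem_iUnion.mp hy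
    exact AddSubgroup.subset_closure
      (Set.mem_iUnion.mpr ⟨i, (hF i).bstar_mem_right ((hF i).lmap_mem a hyi) c⟩)
  · intro a c
    rw [lmap_zero, bstar_zero_left]; exact zero_mem _
  · intro u v _ _ ihu ihv a c
    rw [lmap_add, add_eq_mul_lmap (lmap a u) (lmap a v), lmap_lmap, bstar_mul_left]
    exact add_mem (family_lmap_mem hF _ (ihv _ c)) (ihu a c)
  · intro u _ ihu a c
    rw [lmap_neg]
    have hw : (-(lmap a u))⁻¹ = lmap ((-(lmap a u))⁻¹ * a) u := by
      rw [← lmap_lmap]; exact neg_inv_eq _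
    rw [← inv_inv (-(lmap a u)), bstar_inv]
    refine neg_mem ?_
    rw [hw]
    exact ihu _ _

theorem family_bstar_right' (hF : ∀ i, IsIdeal (F i)) {x : B}
    (hx : x ∈ AddSubgroup.closure (⋃ i, F i)) (c : B) :
    bstar x c ∈ AddSubgroup.closure (⋃ i, F i) := by
  have h := family_bstar_right hF hx 1 c
  rwa [lmap_one] at h

theorem family_mul_conj (hF : ∀ i, IsIdeal (F i)) (b : B) {x : B}
    (hx : x ∈ AddSubgroup.closure (⋃ i, F i)) :
    b * x * b⁻¹ ∈ AddSubgroup.closure (⋃ i, F i) := by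
  rw [mul_conj_formula]
  exact family_conj_mem hF b
    (add_mem (family_lmap_mem hF b hx)
      (family_lmap_mem hF b (family_bstar_right' hF hx b⁻¹)))

theorem family_isIdeal (hF : ∀ i, IsIdeal (F i)) :
    IsIdeal ((AddSubgroup.closure (⋃ i, F i) : AddSubgroup B) : Set B) where
  zero_mem := zero_mem _
  add_mem := fun _ _ hx hy => add_mem hx hy
  neg_mem := fun _ hx => neg_mem hx
  add_conj_mem := fun b _ hx => family_conj_mem hF b hx
  mul_mem := fun _ _ hx hy => family_mul_mem hF hx hy
  inv_mem := fun _ hx => family_inv_mem hF hx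
  mul_conj_mem := fun b _ hx => family_mul_conj hF b hx
  lmap_mem := fun a _ hx => family_lmap_mem hF a hx

theorem family_square_zero (hF : ∀ i, IsIdeal (F i))
    (hz : ∀ i j, ∀ x ∈ F i, ∀ y ∈ F j, bstar x y = 0) :
    ∀ x ∈ AddSubgroup.closure (⋃ i, F i), ∀ y ∈ AddSubgroup.closure (⋃ i, F i),
      bstar x y = 0 := by
  have step1 : ∀ i, ∀ x ∈ F i, ∀ y ∈ AddSubgroup.closure (⋃ i, F i), bstar x y = 0 := by
    intro i x hxi y hy
    refine AddSubgroup.closure_induction (p := fun y _ => bstar x y = 0) ?_ ?_ ?_ ?_ hy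
    · intro z hzU
      obtain ⟨j, hzj⟩ := Set.mem_iUnion.mp hzU
      exact hz i j x hxi z hzj
    · exact bstar_zero_right x
    · intro u v _ _ ihu ihv
      rw [bstar_add_right, ihu, ihv, zero_add, add_zero, sub_self]
    · intro u _ ihu
      have h := bstar_add_right x u (-u)
      rw [add_neg_cancel, bstar_zero_right, ihu, zero_add] at h
      have h2 : u + bstar x (-u) - u = 0 := h.symm
      rw [sub_eq_zero] at h2
      exact left_eq_add.mp h2.symm
  have key : ∀ x ∈ AddSubgroup.closure (⋃ i, F i),
      ∀ y ∈ AddSubgroup.closure (⋃ i, F i), lmap x y = y := by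
    intro x hx
    refine AddSubgroup.closure_induction
      (p := fun x _ => ∀ y ∈ AddSubgroup.closure (⋃ i, F i), lmap x y = y) ?_ ?_ ?_ ?_ hx
    · intro z hzU y hy
      obtain ⟨i, hzi⟩ := Set.mem_iUnion.mp hzU
      have h := step1 i z hzi y hy
      rw [bstar_eq, sub_eq_zero] at h
      exact h
    · intro y hy
      rw [zero_eq_one, lmap_one]
    · intro u v hu hv ihu ihv y hy
      have hinv : ∀ w ∈ AddSubgroup.closure (⋃ i, F i), lmap u⁻¹ w = w := by
        intro w hw
        have h1 : lmap u (lmap u⁻¹ w) = lmap u⁻¹ w := ihu _ (family_lmap_mem hF u⁻¹ hw)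
        rw [lmap_lmap, mul_inv_cancel, lmap_one] at h1
        exact h1.symm
      rw [add_eq_mul_lmap, hinv v hv, ← lmap_lmap, ihv y hy, ihu y hy]
    · intro u hu ihu y hy
      have hinv : ∀ w ∈ AddSubgroup.closure (⋃ i, F i), lmap u⁻¹ w = w := by
        intro w hw
        have h1 : lmap u (lmap u⁻¹ w) = lmap u⁻¹ w := ihu _ (family_lmap_mem hF u⁻¹ hw)
        rw [lmap_lmap, mul_inv_cancel, lmap_one] at h1
        exact h1.symm
      have huinv : u⁻¹ ∈ AddSubgroup.closure (⋃ i, F i) := family_inv_mem hF hu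
      have hneg : -u = u⁻¹ := by rw [← lmap_self_inv, ihu u⁻¹ huinv]
      rw [hneg]
      exact hinv y hy
  intro x hx y hy
  rw [bstar_eq, key x hx y hy, sub_self]

end Family

section Action

variable {B₁ B₂ : Type*} [SkewLeftBrace B₁] [SkewLeftBrace B₂] (α : BraceActionHom B₂ B₁)

theorem BraceActionHom.act_zero (a : B₂) : α.act a (0 : B₁) = 0 := by
  have h := α.act_add a 0 0
  rw [add_zero] at h
  exact left_eq_add.mp h

theorem BraceActionHom.act_neg (a : B₂) (x : B₁) : α.act a (-x) = -(α.act a x) := by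
  have h := α.act_add a x (-x)
  rw [add_neg_cancel, α.act_zero] at h
  exact (neg_eq_of_add_eq_zero_right h.symm).symm

theorem BraceActionHom.act_inv (a : B₂) (x : B₁) : α.act a x⁻¹ = (α.act a x)⁻¹ := by
  have h := α.act_mul a x x⁻¹
  rw [mul_inv_cancel, α.act_one'] at h
  exact (inv_eq_of_mul_eq_one_right h.symm).symm

theorem BraceActionHom.act_act_inv (a : B₂) (x : B₁) : α.act a (α.act a⁻¹ x) = x := by
  rw [← α.act_hom, mul_inv_cancel, α.act_one]

theorem BraceActionHom.act_inv_act (a : B₂) (x : B₁) : α.act a⁻¹ (α.act a x) = x := by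
  rw [← α.act_hom, inv_mul_cancel, α.act_one]

theorem BraceActionHom.act_lmap (a : B₂) (c x : B₁) :
    α.act a (lmap c x) = lmap (α.act a c) (α.act a x) := by
  rw [lmap_def, lmap_def, α.act_add, α.act_neg, α.act_mul]

theorem BraceActionHom.act_bstar (a : B₂) (x y : B₁) :
    α.act a (bstar x y) = bstar (α.act a x) (α.act a y) := by
  rw [bstar_eq, bstar_eq, sub_eq_add_neg, sub_eq_add_neg, α.act_add, α.act_neg,
    α.act_lmap]

theorem BraceActionHom.isIdeal_image {M : Set B₁} (h : IsIdeal M) (a : B₂) :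
    IsIdeal (α.act a '' M) where
  zero_mem := ⟨0, h.zero_mem, α.act_zero a⟩
  add_mem := by
    rintro _ _ ⟨u, hu, rfl⟩ ⟨v, hv, rfl⟩
    exact ⟨u + v, h.add_mem hu hv, α.act_add a u v⟩
  neg_mem := by
    rintro _ ⟨u, hu, rfl⟩
    exact ⟨-u, h.neg_mem hu, α.act_neg a u⟩
  add_conj_mem := by
    rintro b _ ⟨u, hu, rfl⟩
    refine ⟨α.act a⁻¹ b + u + -(α.act a⁻¹ b), h.add_conj_mem _ hu, ?_⟩
    rw [α.act_add, α.act_add, α.act_neg, α.act_act_inv]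
  mul_mem := by
    rintro _ _ ⟨u, hu, rfl⟩ ⟨v, hv, rfl⟩
    exact ⟨u * v, h.mul_mem hu hv, α.act_mul a u v⟩
  inv_mem := by
    rintro _ ⟨u, hu, rfl⟩
    exact ⟨u⁻¹, h.inv_mem hu, α.act_inv a u⟩
  mul_conj_mem := by
    rintro b _ ⟨u, hu, rfl⟩
    refine ⟨α.act a⁻¹ b * u * (α.act a⁻¹ b)⁻¹, h.mul_conj_mem _ hu, ?_⟩
    rw [α.act_mul, α.act_mul, α.act_inv, α.act_act_inv]
  lmap_mem := by
    rintro b _ ⟨u, hu, rfl⟩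
    refine ⟨lmap (α.act a⁻¹ b) u, h.lmap_mem _ hu, ?_⟩
    rw [α.act_lmap, α.act_act_inv]

theorem BraceActionHom.image_image_inv (a : B₂) (X : Set B₁) :
    α.act a '' (α.act a⁻¹ '' X) = X := by
  rw [← Set.image_comp]
  have : α.act a ∘ α.act a⁻¹ = id := funext fun x => α.act_act_inv a x
  rw [this, Set.image_id]

end Action

end SkewLeftBrace


open SkewLeftBrace

/-- If the semidirect product `B₁ ⋊_α B₂` is semiprime and `B₁` is Artinian, then
`B₁` is semiprime. -/
theorem semiprime_of_sdp_semiprime_of_artinian {B₁ B₂ : Type*}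
    [SkewLeftBrace B₁] [SkewLeftBrace B₂] (α : BraceActionHom B₂ B₁)
    (hart : SkewLeftBrace.Artinian B₁)
    (hsp : @SkewLeftBrace.Semiprime _ α.sdp) :
    SkewLeftBrace.Semiprime B₁ := by
  intro I hI hIne hIstar
  have hIz : ∀ x ∈ I, ∀ y ∈ I, bstar x y = 0 := by
    intro x hx y hy
    have hmem : bstar x y ∈ setStar I I :=
      AddSubgroup.subset_closure ⟨x, hx, y, hy, rfl⟩
    rw [hIstar] at hmem
    exact hmem
  -- a minimal nonzero ideal inside I, via the Artinian hypothesis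
  obtain ⟨M, hMI, hM, hMne, hMmin⟩ :
      ∃ M, M ⊆ I ∧ IsIdeal M ∧ M ≠ {0} ∧
        ∀ J : Set B₁, IsIdeal J → J ⊆ M → J = {0} ∨ J = M := by
    by_contra hc
    push_neg at hc
    have step : ∀ t : {M : Set B₁ // IsIdeal M ∧ M ⊆ I ∧ M ≠ {0}},
        ∃ s : {M : Set B₁ // IsIdeal M ∧ M ⊆ I ∧ M ≠ {0}}, s.1 ⊆ t.1 ∧ s.1 ≠ t.1 := by
      rintro ⟨M, hM, hMI, hMne⟩
      obtain ⟨J, hJ, hJM, hJne, hJneM⟩ := hc M hMI hM hMne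
      exact ⟨⟨J, hJ, hJM.trans hMI, hJne⟩, hJM, hJneM⟩
    choose g hg1 hg2 using step
    obtain ⟨N, hN⟩ := hart
      (fun n => (g^[n] ⟨I, hI, subset_rfl, hIne⟩).1)
      (fun n => (g^[n] ⟨I, hI, subset_rfl, hIne⟩).2.1)
      (fun n => by
        show (g^[n + 1] ⟨I, hI, subset_rfl, hIne⟩).1 ⊆ (g^[n] ⟨I, hI, subset_rfl, hIne⟩).1
        rw [Function.iterate_succ_apply']
        exact hg1 _)
    have h1 : (g^[N + 1] ⟨I, hI, subset_rfl, hIne⟩).1 =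
        (g^[N] ⟨I, hI, subset_rfl, hIne⟩).1 := hN (N + 1) (Nat.le_succ N)
    rw [Function.iterate_succ_apply'] at h1
    exact hg2 (g^[N] ⟨I, hI, subset_rfl, hIne⟩) h1
  have hMz : ∀ x ∈ M, ∀ y ∈ M, bstar x y = 0 := fun x hx y hy =>
    hIz x (hMI hx) y (hMI hy)
  -- pairwise star-triviality of the translates of M
  have himz : ∀ c : B₂, ∀ x ∈ α.act c '' M, ∀ y ∈ α.act c '' M, bstar x y = 0 := by
    rintro c _ ⟨u, hu, rfl⟩ _ ⟨v, hv, rfl⟩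
    rw [← α.act_bstar, hMz u hu v hv, α.act_zero]
  have hpair : ∀ a b : B₂, ∀ x ∈ α.act a '' M, ∀ y ∈ α.act b '' M, bstar x y = 0 := by
    intro a b x hx y hy
    have hNa := α.isIdeal_image hM a
    have hNb := α.isIdeal_image hM b
    have hmem : bstar x y ∈ (α.act a '' M) ∩ (α.act b '' M) :=
      ⟨hNa.bstar_mem_right hx y, hNb.bstar_mem_left x hy⟩
    have hD' := α.isIdeal_image (hNa.inter hNb) a⁻¹
    have hsub : α.act a⁻¹ '' ((α.act a '' M) ∩ (α.act b '' M)) ⊆ M := by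
      rintro _ ⟨z, ⟨hz1, _⟩, rfl⟩
      obtain ⟨u, hu, rfl⟩ := hz1
      rw [α.act_inv_act]
      exact hu
    rcases hMmin _ hD' hsub with h0 | hMeq
    · have h1 : α.act a⁻¹ (bstar x y) ∈
          α.act a⁻¹ '' ((α.act a '' M) ∩ (α.act b '' M)) := ⟨bstar x y, hmem, rfl⟩
      rw [h0] at h1
      have h2 : α.act a⁻¹ (bstar x y) = 0 := h1
      have h3 := congrArg (α.act a) h2
      rwa [α.act_act_inv, α.act_zero] at h3
    · have himg : α.act a '' M = (α.act a '' M) ∩ (α.act b '' M) := by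
        conv_lhs => rw [← hMeq]
        rw [α.image_image_inv]
      rw [himg] at hx
      exact himz b x hx.2 y hy
  have hF : ∀ c : B₂, IsIdeal (α.act c '' M) := fun c => α.isIdeal_image hM c
  have hSz : ∀ x ∈ AddSubgroup.closure (⋃ c : B₂, α.act c '' M),
      ∀ y ∈ AddSubgroup.closure (⋃ c : B₂, α.act c '' M), bstar x y = 0 :=
    family_square_zero hF hpair
  have hSideal : IsIdeal ((AddSubgroup.closure (⋃ c : B₂, α.act c '' M) :
      AddSubgroup B₁) : Set B₁) := family_isIdeal hF
  have hSalpha : ∀ (c : B₂) (x : B₁), x ∈ AddSubgroup.closure (⋃ d : B₂, α.act d '' M) →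
      α.act c x ∈ AddSubgroup.closure (⋃ d : B₂, α.act d '' M) := by
    intro c x hx
    refine AddSubgroup.closure_induction
      (p := fun y _ => α.act c y ∈ AddSubgroup.closure (⋃ d : B₂, α.act d '' M))
      ?_ ?_ ?_ ?_ hx
    · intro y hy
      obtain ⟨d, hyd⟩ := Set.mem_iUnion.mp hy
      obtain ⟨u, hu, rfl⟩ := hyd
      exact AddSubgroup.subset_closure
        (Set.mem_iUnion.mpr ⟨c * d, ⟨u, hu, α.act_hom c d u⟩⟩)
    · show α.act c (0 : B₁) ∈ _
      rw [α.act_zero]; exact zero_mem _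
    · intro u v _ _ ihu ihv
      rw [α.act_add]; exact add_mem ihu ihv
    · intro u _ ihu
      rw [α.act_neg]; exact neg_mem ihu
  have hMS : ∀ m ∈ M, m ∈ AddSubgroup.closure (⋃ c : B₂, α.act c '' M) := by
    intro m hm
    exact AddSubgroup.subset_closure (Set.mem_iUnion.mpr ⟨1, ⟨m, hm, α.act_one m⟩⟩)
  obtain ⟨m, hmM, hmne⟩ : ∃ m ∈ M, m ≠ (0 : B₁) := by
    by_contra h
    push_neg at h
    exact hMne (Set.eq_singleton_iff_unique_mem.mpr ⟨hM.zero_mem, h⟩)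
  -- now pass to the semidirect product
  letI instB : SkewLeftBrace (SDP B₁ B₂) := α.sdp
  have hzero : (0 : SDP B₁ B₂) = ⟨0, 0⟩ := rfl
  have hact0 : ∀ x : B₁, α.act 0 x = x := by
    intro x
    rw [zero_eq_one (B := B₂)]
    exact α.act_one x
  have hinv0 : (0 : B₂)⁻¹ = 0 := by
    rw [zero_eq_one (B := B₂), inv_one]
  have hKideal : IsIdeal {p : SDP B₁ B₂ |
      p.fst ∈ AddSubgroup.closure (⋃ c : B₂, α.act c '' M) ∧ p.snd = 0} := by
    constructor
    · exact ⟨zero_mem _, rfl⟩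
    · intro x y hx hy
      refine ⟨?_, ?_⟩
      · show x.fst + y.fst ∈ _
        exact add_mem hx.1 hy.1
      · show x.snd + y.snd = 0
        rw [hx.2, hy.2, add_zero]
    · intro x hx
      refine ⟨?_, ?_⟩
      · show -x.fst ∈ _
        exact neg_mem hx.1
      · show -x.snd = 0
        rw [hx.2, neg_zero]
    · intro b x hx
      refine ⟨?_, ?_⟩
      · show b.fst + x.fst + -b.fst ∈ _
        exact family_conj_mem hF b.fst hx.1
      · show b.snd + x.snd + -b.snd = 0
        rw [hx.2, add_zero, add_neg_cancel]
    · intro x y hx hy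
      refine ⟨?_, ?_⟩
      · show x.fst * α.act x.snd y.fst ∈ _
        rw [hx.2, hact0]
        exact family_mul_mem hF hx.1 hy.1
      · show x.snd * y.snd = 0
        rw [hy.2, mul_zero']
        exact hx.2
    · intro x hx
      refine ⟨?_, ?_⟩
      · show α.act x.snd⁻¹ x.fst⁻¹ ∈ _
        rw [hx.2, hinv0, hact0]
        exact family_inv_mem hF hx.1
      · show x.snd⁻¹ = 0
        rw [hx.2, hinv0]
    · intro b x hx
      refine ⟨?_, ?_⟩
      · show b.fst * α.act b.snd x.fst * α.act (b.snd * x.snd) (α.act b.snd⁻¹ b.fst⁻¹) ∈ _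
        rw [hx.2, mul_zero', α.act_act_inv]
        exact family_mul_conj hF b.fst (hSalpha b.snd x.fst hx.1)
      · show b.snd * x.snd * b.snd⁻¹ = 0
        rw [hx.2, mul_zero', mul_inv_cancel]
        exact zero_eq_one.symm
    · intro a x hx
      refine ⟨?_, ?_⟩
      · show -a.fst + a.fst * α.act a.snd x.fst ∈ _
        rw [← lmap_def]
        exact family_lmap_mem hF _ (hSalpha a.snd x.fst hx.1)
      · show -a.snd + a.snd * x.snd = 0
        rw [hx.2, mul_zero', neg_add_cancel]
  have hKne : {p : SDP B₁ B₂ |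
      p.fst ∈ AddSubgroup.closure (⋃ c : B₂, α.act c '' M) ∧ p.snd = 0} ≠ {0} := by
    intro h
    have hmem : (⟨m, 0⟩ : SDP B₁ B₂) ∈ {p : SDP B₁ B₂ |
        p.fst ∈ AddSubgroup.closure (⋃ c : B₂, α.act c '' M) ∧ p.snd = 0} :=
      ⟨hMS m hmM, rfl⟩
    rw [h] at hmem
    have h2 : (⟨m, 0⟩ : SDP B₁ B₂) = 0 := hmem
    rw [hzero] at h2
    exact hmne (congrArg SDP.fst h2)
  have hgen : {z : SDP B₁ B₂ | ∃ x ∈ {p : SDP B₁ B₂ |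
        p.fst ∈ AddSubgroup.closure (⋃ c : B₂, α.act c '' M) ∧ p.snd = 0},
      ∃ y ∈ {p : SDP B₁ B₂ |
        p.fst ∈ AddSubgroup.closure (⋃ c : B₂, α.act c '' M) ∧ p.snd = 0},
      z = bstar x y} = {0} := by
    apply Set.eq_singleton_iff_unique_mem.mpr
    refine ⟨⟨0, ⟨zero_mem _, rfl⟩, 0, ⟨zero_mem _, rfl⟩, (bstar_zero_right 0).symm⟩, ?_⟩
    rintro z ⟨x, hx, y, hy, rfl⟩
    have hfst : (bstar x y).fst = -x.fst + x.fst * α.act x.snd y.fst + -y.fst := rfl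
    have hsnd : (bstar x y).snd = -x.snd + x.snd * y.snd + -y.snd := rfl
    have h := hSz x.fst hx.1 y.fst hy.1
    rw [bstar_eq, lmap_def, sub_eq_add_neg] at h
    refine SDP.ext ?_ ?_
    · rw [hfst, hx.2, hact0]
      exact h
    · rw [hsnd, hx.2, hy.2, mul_zero', neg_zero, add_zero, zero_add]
      rfl
  have hKstar : setStar
      {p : SDP B₁ B₂ |
        p.fst ∈ AddSubgroup.closure (⋃ c : B₂, α.act c '' M) ∧ p.snd = 0}
      {p : SDP B₁ B₂ |
        p.fst ∈ AddSubgroup.closure (⋃ c : B₂, α.act c '' M) ∧ p.snd = 0} = {0} := by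
    show ((AddSubgroup.closure _ : AddSubgroup (SDP B₁ B₂)) : Set (SDP B₁ B₂)) = {0}
    rw [hgen, AddSubgroup.closure_singleton_zero]
    rfl
  exact absurd hKstar (hsp _ hKideal hKne)
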